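/- For every real number x > 0, tanh(x) > (10x^3 + 105x)/(x^4 + 45x^2 + 105). -/

import Mathlib

open Real

private lemma pos_of_deriv_pos {f f' : ℝ → ℝ} (hd : ∀ y, HasDerivAt f (f' y) y)
    (h0 : f 0 = 0) (hp : ∀ y, 0 < y → 0 < f' y) : ∀ y, 0 < y → 0 < f y := by
  intro y hy
  have hmono : StrictMonoOn f (Set.Ici 0) := by
    apply strictMonoOn_of_deriv_pos (convex_Ici 0)
      (fun x _ => (hd x).continuousAt.continuousWithinAt)
    intro x hx
    rw [interior_Ici] at hx
    rw [(hd x).deriv]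
    exact hp x hx
  have := hmono Set.self_mem_Ici (Set.mem_Ici.2 hy.le) hy
  rwa [h0] at this

private lemma exp_key : ∀ y : ℝ, 0 < y →
    0 < Real.exp y * (y^4 - 20*y^3 + 180*y^2 - 840*y + 1680)
        - (y^4 + 20*y^3 + 180*y^2 + 840*y + 1680) := by
  have P4 : ∀ y : ℝ, HasDerivAt (fun x : ℝ => x^4 - 4*x^3 + 12*x^2 - 24*x + 24)
      (4*y^3 - 12*y^2 + 24*y - 24) y := by
    intro y
    have := (((hasDerivAt_pow 4 y).sub ((hasDerivAt_pow 3 y).const_mul 4)).add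
      ((hasDerivAt_pow 2 y).const_mul 12)).sub ((hasDerivAt_id y).const_mul 24)
    have h := this.add_const 24
    exact h.congr_deriv (by ring)
  have P3 : ∀ y : ℝ, HasDerivAt (fun x : ℝ => x^4 - 8*x^3 + 36*x^2 - 96*x + 120)
      (4*y^3 - 24*y^2 + 72*y - 96) y := by
    intro y
    have := (((hasDerivAt_pow 4 y).sub ((hasDerivAt_pow 3 y).const_mul 8)).add
      ((hasDerivAt_pow 2 y).const_mul 36)).sub ((hasDerivAt_id y).const_mul 96)
    have h := this.add_const 120
    exact h.congr_deriv (by ring)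
  have P2 : ∀ y : ℝ, HasDerivAt (fun x : ℝ => x^4 - 12*x^3 + 72*x^2 - 240*x + 360)
      (4*y^3 - 36*y^2 + 144*y - 240) y := by
    intro y
    have := (((hasDerivAt_pow 4 y).sub ((hasDerivAt_pow 3 y).const_mul 12)).add
      ((hasDerivAt_pow 2 y).const_mul 72)).sub ((hasDerivAt_id y).const_mul 240)
    have h := this.add_const 360
    exact h.congr_deriv (by ring)
  have P1 : ∀ y : ℝ, HasDerivAt (fun x : ℝ => x^4 - 16*x^3 + 120*x^2 - 480*x + 840)
      (4*y^3 - 48*y^2 + 240*y - 480) y := by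
    intro y
    have := (((hasDerivAt_pow 4 y).sub ((hasDerivAt_pow 3 y).const_mul 16)).add
      ((hasDerivAt_pow 2 y).const_mul 120)).sub ((hasDerivAt_id y).const_mul 480)
    have h := this.add_const 840
    exact h.congr_deriv (by ring)
  have P0 : ∀ y : ℝ, HasDerivAt (fun x : ℝ => x^4 - 20*x^3 + 180*x^2 - 840*x + 1680)
      (4*y^3 - 60*y^2 + 360*y - 840) y := by
    intro y
    have := (((hasDerivAt_pow 4 y).sub ((hasDerivAt_pow 3 y).const_mul 20)).add
      ((hasDerivAt_pow 2 y).const_mul 180)).sub ((hasDerivAt_id y).const_mul 840)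
    have h := this.add_const 1680
    exact h.congr_deriv (by ring)
  -- level 4 : f4 y = e^y * p4 y - 24, f4' y = e^y * y^4
  have h4 : ∀ y : ℝ, 0 < y →
      0 < Real.exp y * (y^4 - 4*y^3 + 12*y^2 - 24*y + 24) - 24 := by
    apply pos_of_deriv_pos (f' := fun y => Real.exp y * y^4)
    · intro y
      have := ((Real.hasDerivAt_exp y).mul (P4 y)).sub_const 24
      exact this.congr_deriv (by ring)
    · norm_num
    · intro y hy
      positivity
  -- level 3
  have h3 : ∀ y : ℝ, 0 < y →
      0 < Real.exp y * (y^4 - 8*y^3 + 36*y^2 - 96*y + 120) - (24*y + 120) := by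
    apply pos_of_deriv_pos
      (f' := fun y => Real.exp y * (y^4 - 4*y^3 + 12*y^2 - 24*y + 24) - 24)
    · intro y
      have hl : HasDerivAt (fun x : ℝ => 24*x + 120) 24 y := by
        have := ((hasDerivAt_id y).const_mul 24).add_const 120
        exact this.congr_deriv (by norm_num)
      have := ((Real.hasDerivAt_exp y).mul (P3 y)).sub hl
      exact this.congr_deriv (by ring)
    · norm_num
    · exact h4
  -- level 2
  have h2 : ∀ y : ℝ, 0 < y →
      0 < Real.exp y * (y^4 - 12*y^3 + 72*y^2 - 240*y + 360)
          - (12*y^2 + 120*y + 360) := by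
    apply pos_of_deriv_pos
      (f' := fun y => Real.exp y * (y^4 - 8*y^3 + 36*y^2 - 96*y + 120) - (24*y + 120))
    · intro y
      have hl : HasDerivAt (fun x : ℝ => 12*x^2 + 120*x + 360) (24*y + 120) y := by
        have := (((hasDerivAt_pow 2 y).const_mul 12).add
          ((hasDerivAt_id y).const_mul 120)).add_const 360
        exact this.congr_deriv (by ring)
      have := ((Real.hasDerivAt_exp y).mul (P2 y)).sub hl
      exact this.congr_deriv (by ring)
    · norm_num
    · exact h3
  -- level 1
  have h1 : ∀ y : ℝ, 0 < y →
      0 < Real.exp y * (y^4 - 16*y^3 + 120*y^2 - 480*y + 840)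
          - (4*y^3 + 60*y^2 + 360*y + 840) := by
    apply pos_of_deriv_pos
      (f' := fun y => Real.exp y * (y^4 - 12*y^3 + 72*y^2 - 240*y + 360)
          - (12*y^2 + 120*y + 360))
    · intro y
      have hl : HasDerivAt (fun x : ℝ => 4*x^3 + 60*x^2 + 360*x + 840)
          (12*y^2 + 120*y + 360) y := by
        have := ((((hasDerivAt_pow 3 y).const_mul 4).add
          ((hasDerivAt_pow 2 y).const_mul 60)).add
          ((hasDerivAt_id y).const_mul 360)).add_const 840
        exact this.congr_deriv (by ring)
      have := ((Real.hasDerivAt_exp y).mul (P1 y)).sub hl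
      exact this.congr_deriv (by ring)
    · norm_num
    · exact h2
  -- level 0
  apply pos_of_deriv_pos
    (f' := fun y => Real.exp y * (y^4 - 16*y^3 + 120*y^2 - 480*y + 840)
        - (4*y^3 + 60*y^2 + 360*y + 840))
  · intro y
    have hl : HasDerivAt (fun x : ℝ => x^4 + 20*x^3 + 180*x^2 + 840*x + 1680)
        (4*y^3 + 60*y^2 + 360*y + 840) y := by
      have := (((hasDerivAt_pow 4 y).add ((hasDerivAt_pow 3 y).const_mul 20)).add
        ((hasDerivAt_pow 2 y).const_mul 180)).add
        ((hasDerivAt_id y).const_mul 840)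
      have h := this.add_const 1680
      exact h.congr_deriv (by ring)
    have := ((Real.hasDerivAt_exp y).mul (P0 y)).sub hl
    exact this.congr_deriv (by ring)
  · norm_num
  · exact h1

theorem stmt_1 : ∀ x : ℝ, 0 < x →
    (10 * x ^ 3 + 105 * x) / (x ^ 4 + 45 * x ^ 2 + 105) < Real.tanh x := by
  intro x hx
  have hQ : (0:ℝ) < x ^ 4 + 45 * x ^ 2 + 105 := by positivity
  have hc : 0 < Real.cosh x := Real.cosh_pos x
  rw [Real.tanh_eq_sinh_div_cosh, div_lt_div_iff₀ hQ hc]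
  rw [Real.sinh_eq, Real.cosh_eq, Real.exp_neg]
  set u := Real.exp x with hu
  have hu0 : 0 < u := Real.exp_pos x
  have huinv : u * u⁻¹ = 1 := mul_inv_cancel₀ (ne_of_gt hu0)
  have hkey := exp_key (2 * x) (by linarith)
  have he2 : Real.exp (2 * x) = u * u := by
    rw [two_mul, Real.exp_add]
  rw [he2] at hkey
  have hin : 0 < u*u*((x^4+45*x^2+105) - (10*x^3+105*x))
      - ((x^4+45*x^2+105) + (10*x^3+105*x)) := by nlinarith [hkey]
  rw [← sub_pos]
  have hexp : (u - u⁻¹)/2 * (x^4+45*x^2+105) - (10*x^3+105*x) * ((u + u⁻¹)/2)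
      = u⁻¹/2 * (u*u*((x^4+45*x^2+105) - (10*x^3+105*x))
        - ((x^4+45*x^2+105) + (10*x^3+105*x))) := by
    field_simp
    ring
  rw [hexp]
  exact mul_pos (by positivity) hin
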